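/- Let V(x) be a formal power series with V(0)=1 satisfying x^2(1+x)(1-8x) V'' + x(8-42x-32x^2) V' + (12-40x-16x^2) V = 12, and define F(x) = 2(1-x) - 1/V(x). Then F satisfies the algebraic differential equation: x^2(1+x)(1-8x) F''·F - 2x^2(1-x^2)(1-8x) F'' - 2x^2(1+x)(1-8x)(F')^2 + 2x(4-21x-16x^2) F'·F - 4x(4-23x-9x^2) F' - 12 F^3 + (60-32x+16x^2) F^2 - (96-96x+132x^2) F + (48-64x+176x^2-48x^3) = 0. -/

import Mathlib

open PowerSeries

/-- If `V(0) = 1` satisfies the vicious 3-watermelon ODE and `F = 2(1-x) - 1/V`,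
then `F` satisfies the stated algebraic differential equation. -/
theorem friendly3_dalgebraic (V : ℚ⟦X⟧)
    (h0 : constantCoeff V = 1)
    (hode : X ^ 2 * (1 + X) * (1 - 8 * X) * (derivative ℚ (derivative ℚ V)) +
      X * (8 - 42 * X - 32 * X ^ 2) * (derivative ℚ V) +
      (12 - 40 * X - 16 * X ^ 2) * V = 12) :
    let F : ℚ⟦X⟧ := 2 * (1 - X) - V⁻¹
    X ^ 2 * (1 + X) * (1 - 8 * X) * (derivative ℚ (derivative ℚ F)) * F -
      2 * X ^ 2 * (1 - X ^ 2) * (1 - 8 * X) * (derivative ℚ (derivative ℚ F)) -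
      2 * X ^ 2 * (1 + X) * (1 - 8 * X) * (derivative ℚ F) ^ 2 +
      2 * X * (4 - 21 * X - 16 * X ^ 2) * (derivative ℚ F) * F -
      4 * X * (4 - 23 * X - 9 * X ^ 2) * (derivative ℚ F) -
      12 * F ^ 3 + (60 - 32 * X + 16 * X ^ 2) * F ^ 2 -
      (96 - 96 * X + 132 * X ^ 2) * F +
      (48 - 64 * X + 176 * X ^ 2 - 48 * X ^ 3) = 0 := by
  intro F
  have hU : V * V⁻¹ = 1 := PowerSeries.mul_inv_cancel V (by rw [h0]; norm_num)
  set U : ℚ⟦X⟧ := V⁻¹ with hUdef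
  have h1 : derivative ℚ V * U + V * derivative ℚ U = 0 := by
    have h := congrArg (derivative ℚ) hU
    simp only [Derivation.leibniz, smul_eq_mul, map_one, Derivation.map_one_eq_zero] at h
    linear_combination h
  have h2 : derivative ℚ (derivative ℚ V) * U + derivative ℚ V * derivative ℚ U +
      (derivative ℚ V * derivative ℚ U + V * derivative ℚ (derivative ℚ U)) = 0 := by
    have h := congrArg (derivative ℚ) h1
    simp only [map_add, Derivation.leibniz, smul_eq_mul, map_zero] at h
    linear_combination h
  have hd2 : derivative ℚ (2 : ℚ⟦X⟧) = 0 := by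
    rw [show (2 : ℚ⟦X⟧) = 1 + 1 by norm_num, map_add, Derivation.map_one_eq_zero]
    ring
  have hF0 : F = 2 * (1 - X) - U := rfl
  have hF1 : derivative ℚ F = -2 - derivative ℚ U := by
    rw [hF0, map_sub, Derivation.leibniz, map_sub, Derivation.map_one_eq_zero, derivative_X,
      hd2, smul_eq_mul, smul_eq_mul]
    ring
  rw [hF0, hF1]
  have hF2 : derivative ℚ (-2 - derivative ℚ U) = -derivative ℚ (derivative ℚ U) := by
    rw [map_sub, show ((-2 : ℚ⟦X⟧)) = -(2 : ℚ⟦X⟧) by ring, map_neg, hd2]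
    ring
  rw [hF2]
  set U' := derivative ℚ U
  set U'' := derivative ℚ U'
  set V' := derivative ℚ V
  set V'' := derivative ℚ V'
  linear_combination (X ^ 2 * (1 + X) * (1 - 8 * X) * U ^ 2) * h2 +
    (X * (8 - 42 * X - 32 * X ^ 2) * U ^ 2 -
      2 * X ^ 2 * (1 + X) * (1 - 8 * X) * U * U') * h1 +
    ((12 - 40 * X - 16 * X ^ 2) * U ^ 2 + 2 * X ^ 2 * (1 + X) * (1 - 8 * X) * U' ^ 2 -
      U * (X ^ 2 * (1 + X) * (1 - 8 * X) * U'' + X * (8 - 42 * X - 32 * X ^ 2) * U')) * hU +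
    (-U ^ 3) * hode
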